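/- For q with q⁴ ≠ 1, the braiding R̂ on the tensor square of the adjoint representation of U_q(sl(2)) does not satisfy any quadratic polynomial relation: there exist no scalars a, b such that R̂² = a R̂ + b·id (equivalently, the minimal polynomial of R̂ has degree 3, since R̂ has three distinct eigenvalues q², −q^{-2}, q^{-4}). -/

import Mathlib

open Matrix

/-- The braiding R̂ on the tensor square of the adjoint representation of U_q(sl(2)),
in the basis v₁, v₀, v₋₁ (indexed 0, 1, 2); column (a,b) is the image of v_a ⊗ v_b. -/
noncomputable def Rhat (q : ℝ) : Matrix (Fin 3 × Fin 3) (Fin 3 × Fin 3) ℝ :=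
  Matrix.single (0, 0) (0, 0) (q ^ 2)
  + Matrix.single (1, 0) (0, 1) 1
  + Matrix.single (0, 1) (0, 1) (q ^ 2 - q⁻¹ ^ 2)
  + Matrix.single (2, 0) (0, 2) (q⁻¹ ^ 2)
  + Matrix.single (0, 2) (0, 2) (q⁻¹ * (q - q⁻¹) * (q ^ 2 - q⁻¹ ^ 2))
  + Matrix.single (1, 1) (0, 2) (q ^ 2 - q⁻¹ ^ 2)
  + Matrix.single (0, 1) (1, 0) 1
  + Matrix.single (1, 1) (1, 1) 1
  + Matrix.single (0, 2) (1, 1) (q⁻¹ ^ 2 * (q ^ 2 - q⁻¹ ^ 2))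
  + Matrix.single (2, 1) (1, 2) 1
  + Matrix.single (1, 2) (1, 2) (q ^ 2 - q⁻¹ ^ 2)
  + Matrix.single (0, 2) (2, 0) (q⁻¹ ^ 2)
  + Matrix.single (1, 2) (2, 1) 1
  + Matrix.single (2, 2) (2, 2) (q ^ 2)

/-- For q⁴ ≠ 1 the braiding R̂ satisfies no quadratic polynomial relation:
there are no scalars a, b with R̂² = a R̂ + b·id. -/
theorem stmt_6 (q : ℝ) (hq : q ≠ 0) (hq4 : q ^ 4 ≠ 1) :
    ¬ ∃ a b : ℝ, Rhat q * Rhat q = a • Rhat q + b • (1 : Matrix (Fin 3 × Fin 3) (Fin 3 × Fin 3) ℝ) := by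
  rintro ⟨a, b, h⟩
  have h1 := congrFun (congrFun h (1, 0)) (1, 0)
  have h2 := congrFun (congrFun h (2, 0)) (2, 0)
  simp [Rhat, Matrix.mul_apply, Fintype.sum_prod_type, Fin.sum_univ_three,
    Matrix.add_apply, Matrix.smul_apply, Matrix.one_apply, Matrix.single,
    Prod.ext_iff] at h1 h2
  apply hq4
  rw [← h1] at h2
  field_simp at h2
  nlinarith [h2]
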